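/- arXiv:1904.09182 — 2 statements merged into one kernel-verified Lean document; each statement's English description precedes it below -/
import Mathlib

section
/- For every s > 1/2 there exist constants c_s, C_s > 0 and δ₀ ∈ (0,1) such that for every δ ∈ (0, δ₀): (i) ‖V^δ(t)‖_{H^s} ≤ C_s ‖V^δ(t^δ)‖_{H^s} for every t ∈ [0, t^δ], and (ii) c_s · δ^{1−2s} ≤ ‖V^δ(t^δ)‖_{H^s} ≤ C_s · δ^{1−2s}, where t^δ = π/(2ω) = π/(δ√(4+δ²)). -/
/-- Squared `H^s` norm of a sequence of Fourier coefficients. -/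
noncomputable def hsNormSq (s : ℝ) (v : ℕ → ℂ) : ℝ :=
  ∑' k : ℕ, (1 + (k : ℝ) ^ 2) ^ s * ‖v k‖ ^ 2

/-- `H^s` norm of a sequence of Fourier coefficients. -/
noncomputable def hsNorm (s : ℝ) (v : ℕ → ℂ) : ℝ :=
  Real.sqrt (hsNormSq s v)

/-- Membership in `H^s₊`. -/
def InHs (s : ℝ) (v : ℕ → ℂ) : Prop :=
  Summable fun k : ℕ => (1 + (k : ℝ) ^ 2) ^ s * ‖v k‖ ^ 2

/-- The `k`-th Fourier coefficient of `Π(|v|²v)`: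
the sum over `k₁ - k₂ + k₃ = k` of `v_{k₁} * conj v_{k₂} * v_{k₃}`. -/
noncomputable def cubicTerm (v : ℕ → ℂ) (k : ℕ) : ℂ :=
  ∑' p : ℕ × ℕ × ℕ,
    if p.1 + p.2.2 = k + p.2.1 then v p.1 * (starRingEnd ℂ) (v p.2.1) * v p.2.2 else 0

/-- Absolute convergence of the sum defining `cubicTerm v k`. -/
def CubicSummable (v : ℕ → ℂ) (k : ℕ) : Prop :=
  Summable fun p : ℕ × ℕ × ℕ =>
    ‖if p.1 + p.2.2 = k + p.2.1 then v p.1 * (starRingEnd ℂ) (v p.2.1) * v p.2.2 else 0‖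

/-- Continuity of `t ↦ u(t)` as a curve with values in `H^s₊`. -/
def HsContinuous (s : ℝ) (u : ℝ → ℕ → ℂ) : Prop :=
  ∀ t₀ : ℝ, ∀ δ : ℝ, 0 < δ → ∃ η > 0, ∀ t : ℝ, |t - t₀| < η →
    hsNorm s (fun k => u t k - u t₀ k) < δ

/-- `u ∈ C(ℝ, H^s₊)` is a solution of the NLS–Szegő equation
`i ∂ₜ u + ε^α ∂ₓ² u = Π(|u|²u)`, written on Fourier coefficients. -/
def IsSolutionNLSSzego (s ε α : ℝ) (u : ℝ → ℕ → ℂ) : Prop :=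
  (∀ t : ℝ, InHs s (u t)) ∧ HsContinuous s u ∧
  ∀ t : ℝ, ∀ k : ℕ, CubicSummable (u t) k ∧
    HasDerivAt (fun τ : ℝ => u τ k)
      (-Complex.I * (((ε ^ α * (k : ℝ) ^ 2 : ℝ) : ℂ) * u t k + cubicTerm (u t) k)) t

/-- `ω = δ√(1+δ²/4)`. -/
noncomputable def omg (δ : ℝ) : ℝ := δ * Real.sqrt (1 + δ ^ 2 / 4)

/-- `a^δ(t) = e^{-it(1+δ²)}`. -/
noncomputable def aDel (δ t : ℝ) : ℂ :=
  Complex.exp (-Complex.I * ((t * (1 + δ ^ 2) : ℝ) : ℂ))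

/-- `b^δ(t) = e^{-it(1+δ²/2)}(δ cos(ωt) - i((2+δ²)/√(4+δ²)) sin(ωt))`. -/
noncomputable def bDel (δ t : ℝ) : ℂ :=
  Complex.exp (-Complex.I * ((t * (1 + δ ^ 2 / 2) : ℝ) : ℂ)) *
    (((δ : ℝ) : ℂ) * ((Real.cos (omg δ * t) : ℝ) : ℂ) -
      Complex.I * (((2 + δ ^ 2) / Real.sqrt (4 + δ ^ 2) : ℝ) : ℂ) *
        ((Real.sin (omg δ * t) : ℝ) : ℂ))

/-- `p^δ(t) = -(2i/√(4+δ²)) sin(ωt) e^{-itδ²/2}`. -/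
noncomputable def pDel (δ t : ℝ) : ℂ :=
  -(2 * Complex.I / ((Real.sqrt (4 + δ ^ 2) : ℝ) : ℂ)) *
    ((Real.sin (omg δ * t) : ℝ) : ℂ) *
    Complex.exp (-Complex.I * ((t * δ ^ 2 / 2 : ℝ) : ℂ))

/-- Fourier coefficients of the explicit solution
`V^δ(t,x) = (a^δ(t)e^{ix} + b^δ(t))/(1 - p^δ(t)e^{ix})` of the cubic Szegő
equation with initial datum `e^{ix} + δ`. -/
noncomputable def Vdel (δ t : ℝ) : ℕ → ℂ := fun k =>
  if k = 0 then bDel δ t else (aDel δ t + bDel δ t * pDel δ t) * pDel δ t ^ (k - 1)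


open Real

lemma exp_neg_two_le (y : ℝ) (h0 : 0 ≤ y) (h1 : y ≤ 1/2) : Real.exp (-(2*y)) ≤ 1 - y := by
  have h := Real.add_one_le_exp (2*y)
  have hpos : (0:ℝ) < 1 + 2*y := by linarith
  rw [Real.exp_neg]
  have h2 : (Real.exp (2*y))⁻¹ ≤ (1+2*y)⁻¹ := by
    apply inv_anti₀ hpos; linarith
  have h3 : (1+2*y)⁻¹ ≤ 1 - y := by
    rw [inv_le_iff_one_le_mul₀ hpos]; nlinarith
  linarith

lemma rpow_le_exp_aux (u r β : ℝ) (hu : 0 ≤ u) (hr : 0 < r) (hβ : 0 < β) :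
    u ^ r ≤ (r/β)^r * Real.exp (β*u) := by
  rcases eq_or_lt_of_le hu with h|h
  · rw [← h, Real.zero_rpow (ne_of_gt hr)]; positivity
  · set v := β*u/r with hv
    have hv0 : 0 < v := by positivity
    have h1 : v ≤ Real.exp (v-1) := by
      have := Real.add_one_le_exp (v-1); linarith
    have h2 : u = (r/β) * v := by rw [hv]; field_simp
    have h4 : (Real.exp (v-1))^r = Real.exp ((v-1)*r) := by rw [← Real.exp_mul]
    have h5 : (v-1)*r ≤ β*u := by
      have : v*r = β*u := by rw [hv]; field_simp
      nlinarith
    calc u ^ r = (r/β)^r * v^r := by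
          rw [h2, Real.mul_rpow (by positivity) (le_of_lt hv0)]
      _ ≤ (r/β)^r * (Real.exp (v-1))^r := by gcongr
      _ = (r/β)^r * Real.exp ((v-1)*r) := by rw [h4]
      _ ≤ (r/β)^r * Real.exp (β*u) := by
          gcongr

noncomputable def Tsum (s q : ℝ) : ℝ := ∑' j : ℕ, (1 + ((j:ℝ)+1)^2)^s * q^j

lemma majorant (s y : ℝ) (hs : 0 < s) (hy0 : 0 < y) (hy1 : y ≤ 1) (j : ℕ) :
    (1 + ((j:ℝ)+1)^2)^s * (1-y)^j ≤
      (2^s * (8*s/y)^(2*s) * Real.exp 1) * Real.exp (-(3*y/4))^j := by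
  have hj1 : (0:ℝ) ≤ (j:ℝ)+1 := by positivity
  have hq0 : (0:ℝ) ≤ 1 - y := by linarith
  -- step 1: (1+(j+1)^2)^s ≤ 2^s * ((j+1)^2)^s = 2^s * (j+1)^(2s)
  have e1 : (1 + ((j:ℝ)+1)^2)^s ≤ 2^s * (((j:ℝ)+1))^(2*s) := by
    have h1 : (1 + ((j:ℝ)+1)^2) ≤ 2 * ((j:ℝ)+1)^2 := by nlinarith [sq_nonneg ((j:ℝ))]
    calc (1 + ((j:ℝ)+1)^2)^s ≤ (2 * ((j:ℝ)+1)^2)^s := by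
          apply Real.rpow_le_rpow (by positivity) h1 (le_of_lt hs)
      _ = 2^s * (((j:ℝ)+1)^2)^s := Real.mul_rpow (by norm_num) (by positivity)
      _ = 2^s * (((j:ℝ)+1))^(2*s) := by
          rw [← Real.rpow_natCast ((j:ℝ)+1) 2, ← Real.rpow_mul hj1]; norm_num
  -- step 2: (j+1)^(2s) ≤ (8s/y)^(2s) * exp ((j+1)*y/4)
  have e2 : (((j:ℝ)+1))^(2*s) ≤ (8*s/y)^(2*s) * Real.exp (y/4*((j:ℝ)+1)) := by
    have := rpow_le_exp_aux ((j:ℝ)+1) (2*s) (y/4) hj1 (by linarith) (by positivity)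
    convert this using 3
    rw [div_div_eq_mul_div]; ring
  -- step 3: (1-y)^j ≤ exp(-y)^j
  have e3 : (1-y)^j ≤ Real.exp (-y)^j := by
    apply pow_le_pow_left₀ hq0
    have := Real.add_one_le_exp (-y); linarith
  have e12 : (1 + ((j:ℝ)+1)^2)^s ≤ 2^s * ((8*s/y)^(2*s) * Real.exp (y/4*((j:ℝ)+1))) :=
    e1.trans (mul_le_mul_of_nonneg_left e2 (by positivity))
  have key : (2^s * ((8*s/y)^(2*s) * Real.exp (y/4*((j:ℝ)+1)))) * Real.exp (-y)^j
      = (2^s * (8*s/y)^(2*s)) * Real.exp (y/4) * Real.exp (-(3*y/4))^j := by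
    have h1 : Real.exp (-y)^j = Real.exp (-y*j) := by rw [← Real.exp_nat_mul]; ring_nf
    have h2 : Real.exp (-(3*y/4))^j = Real.exp (-(3*y/4)*j) := by rw [← Real.exp_nat_mul]; ring_nf
    calc (2^s * ((8*s/y)^(2*s) * Real.exp (y/4*((j:ℝ)+1)))) * Real.exp (-y)^j
        = (2^s * (8*s/y)^(2*s)) * (Real.exp (y/4*((j:ℝ)+1)) * Real.exp (-y*j)) := by rw [h1]; ring
      _ = (2^s * (8*s/y)^(2*s)) * Real.exp (y/4*((j:ℝ)+1) + -y*j) := by rw [Real.exp_add]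
      _ = (2^s * (8*s/y)^(2*s)) * Real.exp (y/4 + -(3*y/4)*j) := by
            rw [show y/4*((j:ℝ)+1) + -y*j = y/4 + -(3*y/4)*(j:ℝ) by ring]
      _ = (2^s * (8*s/y)^(2*s)) * (Real.exp (y/4) * Real.exp (-(3*y/4)*j)) := by rw [Real.exp_add]
      _ = (2^s * (8*s/y)^(2*s)) * Real.exp (y/4) * Real.exp (-(3*y/4))^j := by rw [h2]; ring
  calc (1 + ((j:ℝ)+1)^2)^s * (1-y)^j
      ≤ (2^s * ((8*s/y)^(2*s) * Real.exp (y/4*((j:ℝ)+1)))) * Real.exp (-y)^j :=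
        mul_le_mul e12 e3 (by positivity) (by positivity)
    _ = (2^s * (8*s/y)^(2*s)) * Real.exp (y/4) * Real.exp (-(3*y/4))^j := key
    _ ≤ (2^s * (8*s/y)^(2*s) * Real.exp 1) * Real.exp (-(3*y/4))^j := by
        apply mul_le_mul_of_nonneg_right _ (by positivity)
        apply mul_le_mul_of_nonneg_left (Real.exp_le_exp.mpr (by linarith)) (by positivity)

lemma T_summable (s y : ℝ) (hs : 0 < s) (hy0 : 0 < y) (hy1 : y ≤ 1) :
    Summable (fun j : ℕ => (1 + ((j:ℝ)+1)^2)^s * (1-y)^j) := by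
  have hr : Real.exp (-(3*y/4)) < 1 := by
    rw [Real.exp_lt_one_iff]; linarith
  have hg : Summable (fun j : ℕ => (2^s * (8*s/y)^(2*s) * Real.exp 1) * Real.exp (-(3*y/4))^j) :=
    (summable_geometric_of_lt_one (by positivity) hr).mul_left _
  exact Summable.of_nonneg_of_le
    (fun j => mul_nonneg (by positivity) (pow_nonneg (by linarith) j))
    (fun j => majorant s y hs hy0 hy1 j) hg

lemma T_upper (s y : ℝ) (hs : 0 < s) (hy0 : 0 < y) (hy1 : y ≤ 1) :
    Tsum s (1-y) ≤ (2^s * (8*s)^(2*s) * Real.exp 2 * (4/3)) * y^(-(2*s+1)) := by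
  have hr1 : Real.exp (-(3*y/4)) < 1 := by rw [Real.exp_lt_one_iff]; linarith
  have hr0 : (0:ℝ) ≤ Real.exp (-(3*y/4)) := (Real.exp_pos _).le
  have hg : Summable (fun j : ℕ => (2^s * (8*s/y)^(2*s) * Real.exp 1) * Real.exp (-(3*y/4))^j) :=
    (summable_geometric_of_lt_one (by positivity) hr1).mul_left _
  have h1 : Tsum s (1-y) ≤ ∑' j : ℕ, (2^s * (8*s/y)^(2*s) * Real.exp 1) * Real.exp (-(3*y/4))^j :=
    Summable.tsum_le_tsum (fun j => majorant s y hs hy0 hy1 j) (T_summable s y hs hy0 hy1) hg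
  have h2 : ∑' j : ℕ, (2^s * (8*s/y)^(2*s) * Real.exp 1) * Real.exp (-(3*y/4))^j
      = (2^s * (8*s/y)^(2*s) * Real.exp 1) * (1 - Real.exp (-(3*y/4)))⁻¹ := by
    rw [tsum_mul_left, tsum_geometric_of_lt_one hr0 hr1]
  -- geometric sum bound : (1 - exp(-u))⁻¹ ≤ e/u for 0 < u ≤ 1
  have hgeom : (1 - Real.exp (-(3*y/4)))⁻¹ ≤ Real.exp 1 * (4/(3*y)) := by
    have hu0 : (0:ℝ) < 3*y/4 := by linarith
    have hlow : (3*y/4) * Real.exp (-1) ≤ 1 - Real.exp (-(3*y/4)) := by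
      have hb := Real.add_one_le_exp (3*y/4)
      have hexpmono : Real.exp (-1) ≤ Real.exp (-(3*y/4)) := Real.exp_le_exp.mpr (by linarith)
      have hmul : Real.exp (3*y/4) * Real.exp (-(3*y/4)) = 1 := by
        rw [← Real.exp_add]; norm_num
      nlinarith [mul_le_mul_of_nonneg_right (show 3*y/4 ≤ Real.exp (3*y/4) - 1 by linarith) hr0,
        mul_le_mul_of_nonneg_left hexpmono hu0.le]
    have hpos : (0:ℝ) < (3*y/4) * Real.exp (-1) := by positivity
    have := inv_anti₀ hpos hlow
    refine this.trans ?_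
    rw [mul_inv]
    rw [Real.exp_neg]
    rw [inv_inv]
    have : ((3:ℝ)*y/4)⁻¹ = 4/(3*y) := by field_simp
    rw [this]; ring_nf; exact le_rfl
  have h3 : (2^s * (8*s/y)^(2*s) * Real.exp 1) * (1 - Real.exp (-(3*y/4)))⁻¹
      ≤ (2^s * (8*s/y)^(2*s) * Real.exp 1) * (Real.exp 1 * (4/(3*y))) := by
    apply mul_le_mul_of_nonneg_left hgeom (by positivity)
  have h4 : (2^s * (8*s/y)^(2*s) * Real.exp 1) * (Real.exp 1 * (4/(3*y)))
      = (2^s * (8*s)^(2*s) * Real.exp 2 * (4/3)) * (y^(-(2*s)) * y⁻¹) := by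
    rw [Real.div_rpow (by positivity) hy0.le, Real.rpow_neg hy0.le]
    rw [show Real.exp 2 = Real.exp 1 * Real.exp 1 by rw [← Real.exp_add]; norm_num]
    field_simp
  have h5 : y^(-(2*s)) * y⁻¹ = y^(-(2*s+1)) := by
    rw [show -(2*s+1) = -(2*s) + (-1) by ring, Real.rpow_add hy0, Real.rpow_neg_one]
  calc Tsum s (1-y) ≤ _ := h1
    _ = _ := h2
    _ ≤ _ := h3
    _ = _ := by rw [h4, h5]

lemma T_lower (s y : ℝ) (hs : 0 < s) (hy0 : 0 < y) (hy1 : y ≤ 1/5) :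
    Real.exp (-5) * y^(-(2*s+1)) ≤ Tsum s (1-y) := by
  set N : ℕ := ⌈1/y⌉₊ with hN
  have hNy : 1/y ≤ (N:ℝ) := Nat.le_ceil _
  have hNup : (N:ℝ) ≤ 6/(5*y) := by
    have h1 : (N:ℝ) < 1/y + 1 := Nat.ceil_lt_add_one (by positivity)
    have h2 : (1:ℝ) ≤ 1/(5*y) := by rw [le_div_iff₀ (by positivity)]; linarith
    have h3 : 1/y + 1/(5*y) = 6/(5*y) := by field_simp; ring
    linarith
  have hq0 : (0:ℝ) ≤ 1 - y := by linarith
  have hq1 : 1 - y ≤ 1 := by linarith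
  have hterm : ∀ j ∈ Finset.Icc N (2*N),
      y^(-(2*s)) * Real.exp (-5) ≤ (1 + ((j:ℝ)+1)^2)^s * (1-y)^j := by
    intro j hj
    rw [Finset.mem_Icc] at hj
    have hjN : (N:ℝ) ≤ (j:ℝ) := by exact_mod_cast hj.1
    have hbase : (1/y)^2 ≤ 1 + ((j:ℝ)+1)^2 := by
      have h1y : (0:ℝ) < 1/y := by positivity
      have hle : 1/y ≤ (j:ℝ)+1 := by linarith
      have := pow_le_pow_left₀ h1y.le hle 2
      linarith
    have h1 : y^(-(2*s)) ≤ (1 + ((j:ℝ)+1)^2)^s := by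
      have he : ((1/y)^2 : ℝ)^s = y^(-(2*s)) := by
        rw [one_div, ← Real.rpow_natCast y⁻¹ 2, ← Real.rpow_mul (by positivity),
          Real.inv_rpow hy0.le, ← Real.rpow_neg hy0.le]
        norm_num
      rw [← he]
      exact Real.rpow_le_rpow (by positivity) hbase hs.le
    have h2 : Real.exp (-5) ≤ (1-y)^j := by
      have hle : (1-y)^j ≥ (1-y)^(2*N) :=
        pow_le_pow_of_le_one hq0 hq1 hj.2
      have hle2 : (Real.exp (-(2*y)))^(2*N) ≤ (1-y)^(2*N) :=
        pow_le_pow_left₀ (Real.exp_pos _).le (exp_neg_two_le y hy0.le (by linarith)) _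
      have hle3 : Real.exp (-5) ≤ (Real.exp (-(2*y)))^(2*N) := by
        rw [← Real.exp_nat_mul]
        apply Real.exp_le_exp.mpr
        have hcast : ((2*N : ℕ):ℝ) = 2*(N:ℝ) := by push_cast; ring
        rw [hcast]
        have : 2*(N:ℝ) * (2*y) ≤ 24/5 := by
          have := mul_le_mul_of_nonneg_right hNup (show (0:ℝ) ≤ 4*y by linarith)
          have hy' : 6/(5*y)*(4*y) = 24/5 := by field_simp; ring
          nlinarith
        nlinarith
      linarith
    calc y^(-(2*s)) * Real.exp (-5) ≤ (1 + ((j:ℝ)+1)^2)^s * Real.exp (-5) := by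
          apply mul_le_mul_of_nonneg_right h1 (Real.exp_pos _).le
      _ ≤ (1 + ((j:ℝ)+1)^2)^s * (1-y)^j := by
          apply mul_le_mul_of_nonneg_left h2 (by positivity)
  have hsum : (Finset.Icc N (2*N)).card • (y^(-(2*s)) * Real.exp (-5))
      ≤ ∑ j ∈ Finset.Icc N (2*N), (1 + ((j:ℝ)+1)^2)^s * (1-y)^j :=
    Finset.card_nsmul_le_sum _ _ _ hterm
  have hcard : (Finset.Icc N (2*N)).card = N + 1 := by
    rw [Nat.card_Icc]; omega
  have htsum : ∑ j ∈ Finset.Icc N (2*N), (1 + ((j:ℝ)+1)^2)^s * (1-y)^j ≤ Tsum s (1-y) :=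
    Summable.sum_le_tsum _ (fun j _ => mul_nonneg (by positivity) (pow_nonneg hq0 j))
      (T_summable s y hs hy0 (by linarith))
  have hfin : Real.exp (-5) * y^(-(2*s+1)) ≤ ((N:ℝ)+1) * (y^(-(2*s)) * Real.exp (-5)) := by
    have h5 : y^(-(2*s+1)) = y^(-(2*s)) * y⁻¹ := by
      rw [show -(2*s+1) = -(2*s) + (-1) by ring, Real.rpow_add hy0, Real.rpow_neg_one]
    rw [h5]
    have hyN : y⁻¹ ≤ (N:ℝ)+1 := by
      rw [← one_div]; linarith
    have hpos : (0:ℝ) ≤ y^(-(2*s)) * Real.exp (-5) := by positivity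
    calc Real.exp (-5) * (y^(-(2*s)) * y⁻¹) = y⁻¹ * (y^(-(2*s)) * Real.exp (-5)) := by ring
      _ ≤ ((N:ℝ)+1) * (y^(-(2*s)) * Real.exp (-5)) := mul_le_mul_of_nonneg_right hyN hpos
  have hsum' : ((N:ℝ)+1) * (y^(-(2*s)) * Real.exp (-5))
      ≤ ∑ j ∈ Finset.Icc N (2*N), (1 + ((j:ℝ)+1)^2)^s * (1-y)^j := by
    have h := hsum
    rw [hcard, nsmul_eq_mul, Nat.cast_add, Nat.cast_one] at h
    exact h
  calc Real.exp (-5) * y^(-(2*s+1)) ≤ ((N:ℝ)+1) * (y^(-(2*s)) * Real.exp (-5)) := hfin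
    _ ≤ ∑ j ∈ Finset.Icc N (2*N), (1 + ((j:ℝ)+1)^2)^s * (1-y)^j := hsum'
    _ ≤ Tsum s (1-y) := htsum

lemma norm_exp_neg_I (r : ℝ) : ‖Complex.exp (-Complex.I * (r:ℂ))‖ = 1 := by
  simp [Complex.norm_exp]

lemma normSq_pDel (δ t : ℝ) (hδ : 0 < δ) :
    ‖pDel δ t‖^2 = 4 * Real.sin (omg δ * t)^2 / (4+δ^2) := by
  have hr : Real.sqrt (4+δ^2) > 0 := Real.sqrt_pos.mpr (by positivity)
  have hr2 : Real.sqrt (4+δ^2)^2 = 4+δ^2 := Real.sq_sqrt (by positivity)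
  rw [pDel]
  rw [norm_mul, norm_mul, norm_exp_neg_I, mul_one, norm_neg, norm_div]
  simp only [norm_mul, Complex.norm_real, Complex.norm_I, Complex.norm_ofNat,
    Real.norm_eq_abs, mul_one]
  rw [abs_of_nonneg hr.le]
  rw [mul_pow, div_pow, hr2, sq_abs]
  ring

lemma norm_sq_real_add_real_mul_I (x z : ℝ) :
    ‖(x:ℂ) + (z:ℂ)*Complex.I‖^2 = x^2 + z^2 := by
  rw [← Complex.normSq_eq_norm_sq]
  simp [Complex.normSq_add_mul_I]

lemma norm_bDel_sq (δ t : ℝ) :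
    ‖bDel δ t‖^2 = (δ*Real.cos (omg δ*t))^2
      + ((2+δ^2)/Real.sqrt (4+δ^2)*Real.sin (omg δ*t))^2 := by
  rw [bDel, norm_mul, norm_exp_neg_I, one_mul]
  rw [show (((δ : ℝ) : ℂ) * ((Real.cos (omg δ * t) : ℝ) : ℂ) -
      Complex.I * (((2 + δ ^ 2) / Real.sqrt (4 + δ ^ 2) : ℝ) : ℂ) *
        ((Real.sin (omg δ * t) : ℝ) : ℂ))
    = ((δ*Real.cos (omg δ*t) : ℝ):ℂ)
      + ((-((2+δ^2)/Real.sqrt (4+δ^2)*Real.sin (omg δ*t)) : ℝ):ℂ)*Complex.I by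
      push_cast; ring]
  rw [norm_sq_real_add_real_mul_I]
  ring

noncomputable def Xr (δ t : ℝ) : ℝ :=
  1 - 2*(2+δ^2)*Real.sin (omg δ*t)^2/(Real.sqrt (4+δ^2))^2

noncomputable def Yr (δ t : ℝ) : ℝ :=
  -(2*δ*Real.cos (omg δ*t)*Real.sin (omg δ*t)/Real.sqrt (4+δ^2))

lemma apb_eq (δ t : ℝ) (hδ : 0 < δ) :
    aDel δ t + bDel δ t * pDel δ t =
      Complex.exp (-Complex.I*((t*(1+δ^2):ℝ):ℂ)) *
        (((Xr δ t : ℝ):ℂ) + ((Yr δ t : ℝ):ℂ)*Complex.I) := by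
  have hr : Real.sqrt (4+δ^2) > 0 := Real.sqrt_pos.mpr (by positivity)
  have hrc : ((Real.sqrt (4+δ^2) : ℝ):ℂ) ≠ 0 := by
    exact_mod_cast ne_of_gt hr
  have hexp : Complex.exp (-Complex.I * ((t * (1 + δ ^ 2 / 2) : ℝ) : ℂ)) *
      Complex.exp (-Complex.I * ((t * δ ^ 2 / 2 : ℝ) : ℂ))
      = Complex.exp (-Complex.I * ((t * (1 + δ ^ 2) : ℝ) : ℂ)) := by
    rw [← Complex.exp_add]; congr 1; push_cast; ring
  rw [aDel, bDel, pDel, Xr, Yr]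
  rw [show ∀ E2 w q E3 : ℂ, E2 * w * (q * E3) = (E2*E3) * (w*q) from fun _ _ _ _ => by ring]
  rw [hexp]
  have h : (1:ℂ) + (((δ : ℝ) : ℂ) * ((Real.cos (omg δ * t) : ℝ) : ℂ) -
      Complex.I * (((2 + δ ^ 2) / Real.sqrt (4 + δ ^ 2) : ℝ) : ℂ) *
        ((Real.sin (omg δ * t) : ℝ) : ℂ)) *
      (-(2 * Complex.I / ((Real.sqrt (4 + δ ^ 2) : ℝ) : ℂ)) * ((Real.sin (omg δ * t) : ℝ) : ℂ))
      = (((1 - 2*(2+δ^2)*Real.sin (omg δ*t)^2/(Real.sqrt (4+δ^2))^2 : ℝ)):ℂ)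
        + (((-(2*δ*Real.cos (omg δ*t)*Real.sin (omg δ*t)/Real.sqrt (4+δ^2)) : ℝ)):ℂ)*Complex.I := by
    push_cast
    field_simp
    ring_nf
    rw [Complex.I_sq]
    ring
  rw [← h]
  ring

lemma norm_apb_sq (δ t : ℝ) (hδ : 0 < δ) :
    ‖aDel δ t + bDel δ t * pDel δ t‖^2 = Xr δ t^2 + Yr δ t^2 := by
  rw [apb_eq δ t hδ, norm_mul, norm_exp_neg_I, one_mul, norm_sq_real_add_real_mul_I]

lemma one_sub_q (δ t : ℝ) (hδ : 0 < δ) :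
    1 - ‖pDel δ t‖^2 = (4*Real.cos (omg δ*t)^2 + δ^2)/(4+δ^2) := by
  rw [normSq_pDel δ t hδ]
  have h := Real.sin_sq_add_cos_sq (omg δ*t)
  field_simp
  linarith [h]

lemma q_lt_one (δ t : ℝ) (hδ : 0 < δ) : ‖pDel δ t‖^2 < 1 := by
  have h := one_sub_q δ t hδ
  have h2 : (4*Real.cos (omg δ*t)^2 + δ^2)/(4+δ^2) > 0 := by positivity
  linarith

lemma y_lower (δ t : ℝ) (hδ : 0 < δ) (hδ1 : δ ≤ 1) :
    δ^2/5 ≤ 1 - ‖pDel δ t‖^2 := by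
  rw [one_sub_q δ t hδ]
  rw [div_le_div_iff₀ (by norm_num) (by positivity)]
  have hd2 : δ^2 ≤ 1 := by nlinarith
  nlinarith [sq_nonneg (Real.cos (omg δ*t)), sq_nonneg δ, hd2]

lemma hsNormSq_Vdel (s δ t : ℝ) (hs : 0 < s) (hδ0 : 0 < δ) (hδ1 : δ ≤ 1) :
    hsNormSq s (Vdel δ t) = ‖bDel δ t‖^2
      + ‖aDel δ t + bDel δ t * pDel δ t‖^2 * Tsum s (‖pDel δ t‖^2) := by
  have hq0 : (0:ℝ) ≤ ‖pDel δ t‖^2 := by positivity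
  have hq1 : ‖pDel δ t‖^2 < 1 := q_lt_one δ t hδ0
  set q := ‖pDel δ t‖^2 with hq
  set W := ‖aDel δ t + bDel δ t * pDel δ t‖ with hW
  have hshift : ∀ j : ℕ, (1+((j+1:ℕ):ℝ)^2)^s * ‖Vdel δ t (j+1)‖^2
      = W^2 * ((1 + ((j:ℝ)+1)^2)^s * q^j) := by
    intro j
    have h1 : Vdel δ t (j+1) = (aDel δ t + bDel δ t * pDel δ t) * pDel δ t ^ j := by
      simp [Vdel]
    rw [h1, norm_mul, norm_pow, mul_pow, ← pow_mul, mul_comm j 2, pow_mul]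
    push_cast
    ring
  have hTsummable : Summable (fun j : ℕ => (1 + ((j:ℝ)+1)^2)^s * q^j) := by
    have := T_summable s (1-q) hs (by linarith) (by linarith)
    simpa using this
  have hsum1 : Summable (fun j : ℕ => (1+((j+1:ℕ):ℝ)^2)^s * ‖Vdel δ t (j+1)‖^2) := by
    simp only [hshift]
    exact hTsummable.mul_left _
  have hsumf : Summable (fun k : ℕ => (1+(k:ℝ)^2)^s * ‖Vdel δ t k‖^2) := by
    rw [← summable_nat_add_iff 1]
    exact hsum1
  rw [hsNormSq, hsumf.tsum_eq_zero_add]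
  have h0 : (1+((0:ℕ):ℝ)^2)^s * ‖Vdel δ t 0‖^2 = ‖bDel δ t‖^2 := by
    simp [Vdel, Real.one_rpow]
  rw [h0]
  congr 1
  calc ∑' j : ℕ, (1+((j+1:ℕ):ℝ)^2)^s * ‖Vdel δ t (j+1)‖^2
      = ∑' j : ℕ, W^2 * ((1 + ((j:ℝ)+1)^2)^s * q^j) := by
        exact tsum_congr hshift
    _ = W^2 * Tsum s q := by rw [tsum_mul_left, Tsum]

lemma bDel_sq_le (δ t : ℝ) (hδ0 : 0 < δ) (hδ1 : δ ≤ 1) : ‖bDel δ t‖^2 ≤ 4 := by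
  rw [norm_bDel_sq]
  have hr2 : Real.sqrt (4+δ^2)^2 = 4+δ^2 := Real.sq_sqrt (by positivity)
  have hs1 := Real.sin_sq_add_cos_sq (omg δ*t)
  have h1 : ((2+δ^2)/Real.sqrt (4+δ^2)*Real.sin (omg δ*t))^2
      = (2+δ^2)^2*Real.sin (omg δ*t)^2/(4+δ^2) := by
    rw [mul_pow, div_pow, hr2]; ring
  have h2 : (2+δ^2)^2*Real.sin (omg δ*t)^2/(4+δ^2) ≤ 9/4 := by
    rw [div_le_iff₀ (by positivity)]
    have ha1 : δ^2 ≤ 1 := by nlinarith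
    have hσ1 : Real.sin (omg δ*t)^2 ≤ 1 := by nlinarith [sq_nonneg (Real.cos (omg δ*t))]
    have e : (2+δ^2)^2 ≤ 9 := by nlinarith
    have e2 : (2+δ^2)^2*Real.sin (omg δ*t)^2 ≤ 9 := by
      nlinarith [sq_nonneg (Real.sin (omg δ*t))]
    nlinarith
  have h3 : (δ*Real.cos (omg δ*t))^2 ≤ 1 := by
    nlinarith [sq_nonneg (Real.cos (omg δ*t)), sq_nonneg (Real.sin (omg δ*t)), sq_nonneg (δ*Real.cos (omg δ*t)), sq_nonneg (δ*Real.sin (omg δ*t))]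
  rw [h1]
  linarith

lemma apb_sq_le (δ t : ℝ) (hδ0 : 0 < δ) (hδ1 : δ ≤ 1) :
    ‖aDel δ t + bDel δ t * pDel δ t‖^2 ≤ 6*(1-‖pDel δ t‖^2)^2 := by
  rw [norm_apb_sq δ t hδ0, one_sub_q δ t hδ0, Xr, Yr]
  have hr2 : (Real.sqrt (4+δ^2))^2 = 4+δ^2 := Real.sq_sqrt (by positivity)
  set σ := Real.sin (omg δ*t) with hσdef
  set c := Real.cos (omg δ*t) with hcdef
  have hs1 : σ^2 + c^2 = 1 := Real.sin_sq_add_cos_sq _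
  have hpos : (0:ℝ) < 4+δ^2 := by positivity
  have hu1 : c^2 ≤ 1 := by nlinarith [sq_nonneg σ]
  have ha1 : δ^2 ≤ 1 := by nlinarith
  have key : ((4+δ^2) - 2*(2+δ^2)*σ^2)^2 + 4*δ^2*c^2*σ^2*(4+δ^2) ≤ 6*(4*c^2+δ^2)^2 := by
    have hσ2 : σ^2 = 1 - c^2 := by linarith
    rw [hσ2]
    nlinarith [sq_nonneg c, sq_nonneg δ, sq_nonneg (c*δ), sq_nonneg (c^2*δ^2),
      mul_nonneg (sq_nonneg c) (sq_nonneg δ), sq_nonneg (4*c^2-δ^2), sq_nonneg (4*c^2+δ^2),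
      mul_nonneg (mul_nonneg (sq_nonneg c) (sq_nonneg c)) (sq_nonneg δ)]
  have e1 : (1 - 2*(2+δ^2)*σ^2/(Real.sqrt (4+δ^2))^2)^2 + (-(2*δ*c*σ/Real.sqrt (4+δ^2)))^2
      = (((4+δ^2) - 2*(2+δ^2)*σ^2)^2 + 4*δ^2*c^2*σ^2*(4+δ^2))/(4+δ^2)^2 := by
    rw [neg_sq, div_pow]
    simp only [hr2]
    field_simp
    ring
  have e2 : 6*((4*c^2+δ^2)/(4+δ^2))^2 = 6*(4*c^2+δ^2)^2/(4+δ^2)^2 := by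
    rw [div_pow]; ring
  rw [e1, e2]
  apply div_le_div_of_nonneg_right ?_ (by positivity)
  exact key

lemma omg_tdel (δ : ℝ) (hδ : 0 < δ) :
    omg δ * (Real.pi/(δ*Real.sqrt (4+δ^2))) = Real.pi/2 := by
  have h0 : (0:ℝ) ≤ 4+δ^2 := by positivity
  have hrpos : 0 < Real.sqrt (4+δ^2) := Real.sqrt_pos.mpr (by positivity)
  have h4 : Real.sqrt (1+δ^2/4) = Real.sqrt (4+δ^2)/2 := by
    rw [show (1+δ^2/4) = (4+δ^2)/4 by ring, Real.sqrt_div h0,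
      show Real.sqrt 4 = 2 by rw [show (4:ℝ)=2^2 by norm_num, Real.sqrt_sq]; norm_num]
  rw [omg, h4]
  field_simp

lemma rpow_sq_mul (y s : ℝ) (hy : 0 < y) : y^2 * y^(-(2*s+1)) = y^(1-2*s) := by
  rw [← Real.rpow_natCast y 2, ← Real.rpow_add hy]
  rw [show ((2:ℕ):ℝ) + -(2*s+1) = 1-2*s by push_cast; ring]

lemma rpow_div_base (δ s a : ℝ) (hδ : 0 < δ) (ha : 0 < a) :
    ((δ^2/a : ℝ))^(1-2*s) = a^(2*s-1) * δ^(2-4*s) := by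
  rw [Real.div_rpow (by positivity) ha.le]
  rw [← Real.rpow_natCast δ 2, ← Real.rpow_mul hδ.le]
  rw [div_eq_mul_inv, ← Real.rpow_neg ha.le]
  rw [show -(1-2*s) = 2*s-1 by ring, show ((2:ℕ):ℝ)*(1-2*s) = 2-4*s by push_cast; ring]
  ring

lemma hsNormSq_Vdel_upper (s δ t : ℝ) (hs : 1/2 < s) (hδ0 : 0 < δ) (hδ1 : δ ≤ 1) :
    hsNormSq s (Vdel δ t)
      ≤ (4 + 6*(2^s*(8*s)^(2*s)*Real.exp 2*(4/3))*(5:ℝ)^(2*s-1)) * δ^(2-4*s) := by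
  have hs0 : 0 < s := by linarith
  set As := 2^s*(8*s)^(2*s)*Real.exp 2*(4/3) with hAs
  have hAspos : 0 < As := by rw [hAs]; positivity
  have hq0 : (0:ℝ) ≤ ‖pDel δ t‖^2 := by positivity
  have hq1 : ‖pDel δ t‖^2 < 1 := q_lt_one δ t hδ0
  set q := ‖pDel δ t‖^2 with hqdef
  set y := 1 - q with hy
  have hy0 : 0 < y := by rw [hy]; linarith
  have hylow : δ^2/5 ≤ y := y_lower δ t hδ0 hδ1
  have hy1 : y ≤ 1 := by rw [hy]; linarith
  have h1yq : (1:ℝ) - y = q := by rw [hy]; ring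
  have hT : Tsum s q ≤ As * y^(-(2*s+1)) := by
    have h := T_upper s y hs0 hy0 hy1
    rw [h1yq] at h
    exact h
  have hW : ‖aDel δ t + bDel δ t * pDel δ t‖^2 ≤ 6*y^2 := by
    have := apb_sq_le δ t hδ0 hδ1
    rw [hy]
    exact this
  have hTpos : 0 ≤ Tsum s q := by
    apply tsum_nonneg
    intro j
    exact mul_nonneg (by positivity) (pow_nonneg hq0 j)
  have step : ‖aDel δ t + bDel δ t * pDel δ t‖^2 * Tsum s q
      ≤ 6*As*y^(1-2*s) := by
    calc ‖aDel δ t + bDel δ t * pDel δ t‖^2 * Tsum s q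
        ≤ 6*y^2 * (As * y^(-(2*s+1))) :=
          mul_le_mul hW hT hTpos (by positivity)
      _ = 6*As*(y^2 * y^(-(2*s+1))) := by ring
      _ = 6*As*y^(1-2*s) := by rw [rpow_sq_mul y s hy0]
  have hymono : y^(1-2*s) ≤ (δ^2/5)^(1-2*s) :=
    Real.rpow_le_rpow_of_nonpos (by positivity) hylow (by linarith)
  have hδe1 : (1:ℝ) ≤ δ^(2-4*s) :=
    Real.one_le_rpow_of_pos_of_le_one_of_nonpos hδ0 hδ1 (by linarith)
  have hb := bDel_sq_le δ t hδ0 hδ1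
  rw [hsNormSq_Vdel s δ t hs0 hδ0 hδ1]
  have hfin : 6*As*y^(1-2*s) ≤ 6*As*(5^(2*s-1)*δ^(2-4*s)) := by
    rw [← rpow_div_base δ s 5 hδ0 (by norm_num)]
    exact mul_le_mul_of_nonneg_left hymono (by positivity)
  calc ‖bDel δ t‖^2 + ‖aDel δ t + bDel δ t * pDel δ t‖^2 * Tsum s q
      ≤ 4 + 6*As*(5^(2*s-1)*δ^(2-4*s)) := by
        have := step.trans hfin
        linarith
    _ ≤ 4*δ^(2-4*s) + 6*As*(5^(2*s-1)*δ^(2-4*s)) := by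
        nlinarith
    _ = (4 + 6*As*(5:ℝ)^(2*s-1)) * δ^(2-4*s) := by ring

lemma hsNormSq_Vdel_lower (s δ : ℝ) (hs : 1/2 < s) (hδ0 : 0 < δ) (hδ1 : δ ≤ 1) :
    (Real.exp (-5)*(4:ℝ)^(2*s-1)) * δ^(2-4*s)
      ≤ hsNormSq s (Vdel δ (Real.pi/(δ*Real.sqrt (4+δ^2)))) := by
  set t := Real.pi/(δ*Real.sqrt (4+δ^2)) with htdef
  have homg : omg δ * t = Real.pi/2 := omg_tdel δ hδ0
  have hsin : Real.sin (omg δ*t) = 1 := by rw [homg, Real.sin_pi_div_two]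
  have hcos : Real.cos (omg δ*t) = 0 := by rw [homg, Real.cos_pi_div_two]
  have hr2 : (Real.sqrt (4+δ^2))^2 = 4+δ^2 := Real.sq_sqrt (by positivity)
  have hyδ : 1 - ‖pDel δ t‖^2 = δ^2/(4+δ^2) := by
    rw [one_sub_q δ t hδ0, hcos]; ring_nf
  have hX : Xr δ t = -(δ^2/(4+δ^2)) := by
    rw [Xr, hsin, hr2]; field_simp; ring
  have hY : Yr δ t = 0 := by rw [Yr, hcos]; ring
  have hW : ‖aDel δ t + bDel δ t * pDel δ t‖^2 = (δ^2/(4+δ^2))^2 := by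
    rw [norm_apb_sq δ t hδ0, hX, hY]; ring
  set yδ := δ^2/(4+δ^2) with hyd
  have hyδ0 : 0 < yδ := by rw [hyd]; positivity
  have hyδ5 : yδ ≤ 1/5 := by
    rw [hyd, div_le_div_iff₀ (by positivity) (by norm_num)]
    nlinarith
  have hq : ‖pDel δ t‖^2 = 1 - yδ := by rw [hyd]; linarith [hyδ]
  have hT : Real.exp (-5) * yδ^(-(2*s+1)) ≤ Tsum s (1-yδ) :=
    T_lower s yδ (by linarith) hyδ0 hyδ5
  rw [hsNormSq_Vdel s δ t (by linarith) hδ0 hδ1, hq, hW]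
  have hbpos : 0 ≤ ‖bDel δ t‖^2 := sq_nonneg _
  have key : (Real.exp (-5)) * yδ^(1-2*s) ≤ yδ^2 * Tsum s (1-yδ) := by
    have h1 : yδ^2 * (Real.exp (-5) * yδ^(-(2*s+1))) ≤ yδ^2 * Tsum s (1-yδ) :=
      mul_le_mul_of_nonneg_left hT (by positivity)
    have h2 : yδ^2 * (Real.exp (-5) * yδ^(-(2*s+1)))
        = Real.exp (-5) * (yδ^2 * yδ^(-(2*s+1))) := by ring
    rw [h2, rpow_sq_mul yδ s hyδ0] at h1
    exact h1
  have hyδ4 : yδ ≤ δ^2/4 := by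
    rw [hyd]
    apply div_le_div_of_nonneg_left (by positivity) (by norm_num)
    nlinarith
  have hmono : (δ^2/4)^(1-2*s) ≤ yδ^(1-2*s) :=
    Real.rpow_le_rpow_of_nonpos hyδ0 hyδ4 (by linarith)
  have hmono' : Real.exp (-5) * (δ^2/4)^(1-2*s) ≤ Real.exp (-5) * yδ^(1-2*s) :=
    mul_le_mul_of_nonneg_left hmono (Real.exp_pos _).le
  rw [rpow_div_base δ s 4 hδ0 (by norm_num)] at hmono'
  calc Real.exp (-5)*(4:ℝ)^(2*s-1) * δ^(2-4*s)
      = Real.exp (-5) * ((4:ℝ)^(2*s-1) * δ^(2-4*s)) := by ring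
    _ ≤ Real.exp (-5) * yδ^(1-2*s) := hmono'
    _ ≤ yδ^2 * Tsum s (1-yδ) := key
    _ ≤ ‖bDel δ t‖^2 + yδ^2 * Tsum s (1-yδ) := by linarith

lemma sqrt_rpow_half (δ s : ℝ) (hδ : 0 < δ) : Real.sqrt (δ^(2-4*s)) = δ^(1-2*s) := by
  rw [Real.sqrt_eq_rpow, ← Real.rpow_mul hδ.le, show (2-4*s)*(1/2) = 1-2*s by ring]

/-- Growth of Sobolev norms for the cubic Szegő equation with initial datum
`e^{ix} + δ`: at time `t^δ = π/(δ√(4+δ²))` the `H^s` norm is of size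
`δ^{1-2s}`, and it is maximal (up to a constant) on `[0, t^δ]`. -/
theorem statement9 (s : ℝ) (hs : 1 / 2 < s) :
    ∃ c : ℝ, 0 < c ∧ ∃ C : ℝ, 0 < C ∧ ∃ δ₀ ∈ Set.Ioo (0 : ℝ) 1,
      ∀ δ ∈ Set.Ioo (0 : ℝ) δ₀, ∀ tδ : ℝ, tδ = Real.pi / (δ * Real.sqrt (4 + δ ^ 2)) →
        (∀ t ∈ Set.Icc (0 : ℝ) tδ, hsNorm s (Vdel δ t) ≤ C * hsNorm s (Vdel δ tδ)) ∧
        c * δ ^ (1 - 2 * s) ≤ hsNorm s (Vdel δ tδ) ∧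
        hsNorm s (Vdel δ tδ) ≤ C * δ ^ (1 - 2 * s) := by
  set c1 := Real.exp (-5)*(4:ℝ)^(2*s-1) with hc1
  set C1 := 4 + 6*(2^s*(8*s)^(2*s)*Real.exp 2*(4/3))*(5:ℝ)^(2*s-1) with hC1
  have hs0 : 0 < s := by linarith
  have hc1pos : 0 < c1 := by rw [hc1]; positivity
  have hC1pos : 0 < C1 := by rw [hC1]; positivity
  set sc := Real.sqrt c1 with hsc
  set SC := Real.sqrt C1 with hSC
  have hscpos : 0 < sc := Real.sqrt_pos.mpr hc1pos
  have hSCpos : 0 < SC := Real.sqrt_pos.mpr hC1pos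
  refine ⟨sc, hscpos, SC + SC/sc, by positivity, 1/2, by norm_num, ?_⟩
  rintro δ ⟨hδ0, hδhalf⟩ tδ rfl
  have hδ1 : δ ≤ 1 := by linarith
  have hE : Real.sqrt (δ^(2-4*s)) = δ^(1-2*s) := sqrt_rpow_half δ s hδ0
  have hEpos : 0 < δ^(1-2*s) := Real.rpow_pos_of_pos hδ0 _
  have hup : ∀ t : ℝ, hsNorm s (Vdel δ t) ≤ SC * δ^(1-2*s) := by
    intro t
    have h := Real.sqrt_le_sqrt (hsNormSq_Vdel_upper s δ t hs hδ0 hδ1)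
    rw [Real.sqrt_mul hC1pos.le, hE] at h
    exact h
  have hlo : sc * δ^(1-2*s) ≤ hsNorm s (Vdel δ (Real.pi/(δ*Real.sqrt (4+δ^2)))) := by
    have h := Real.sqrt_le_sqrt (hsNormSq_Vdel_lower s δ hs hδ0 hδ1)
    rw [Real.sqrt_mul hc1pos.le, hE] at h
    exact h
  have hnormpos : 0 ≤ hsNorm s (Vdel δ (Real.pi/(δ*Real.sqrt (4+δ^2)))) := Real.sqrt_nonneg _
  refine ⟨?_, hlo, (hup _).trans ?_⟩
  · intro t _
    calc hsNorm s (Vdel δ t) ≤ SC * δ^(1-2*s) := hup t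
      _ = (SC/sc) * (sc * δ^(1-2*s)) := by field_simp
      _ ≤ (SC/sc) * hsNorm s (Vdel δ (Real.pi/(δ*Real.sqrt (4+δ^2)))) := by
          apply mul_le_mul_of_nonneg_left hlo (by positivity)
      _ ≤ (SC + SC/sc) * hsNorm s (Vdel δ (Real.pi/(δ*Real.sqrt (4+δ^2)))) := by
          apply mul_le_mul_of_nonneg_right _ hnormpos
          linarith
  · apply mul_le_mul_of_nonneg_right _ hEpos.le
    have : 0 < SC/sc := by positivity
    linarith
end

section
/- Let a, b, p ∈ ℂ with |p| < 1, and let (f_k)_{k∈ℕ} be the sequence f₀ = b and f_k = (a + bp)·p^{k−1} for k ≥ 1 (the Fourier coefficients of x ↦ (a e^{ix}+b)/(1 − p e^{ix})). Then Σ_{k≥1} k·|f_k|² = |a+bp|²/(1−|p|²)², and for every s > 1/2 there exist constants c_s, C_s > 0, independent of a, b, p, such that c_s·|a+bp|²/(1−|p|²)^{2s+1} ≤ Σ_{k≥1}(1+k²)^s·|f_k|² ≤ C_s·|a+bp|²/(1−|p|²)^{2s+1}. -/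
open Real

section HardyAux

private lemma hardy_auxB {s x : ℝ} (hs : 0 < s) (hx : 0 ≤ x) :
    x ^ (2*s) ≤ (4*s) ^ (2*s) * Real.exp (x/2) := by
  have h4s : (0:ℝ) < 4*s := by linarith
  set y := x / (4*s) with hy
  have hy0 : 0 ≤ y := div_nonneg hx h4s.le
  have hxy : x = 4*s*y := by rw [hy, mul_div_cancel₀ x h4s.ne']
  have h2 : y ^ (2*s) ≤ (Real.exp y) ^ (2*s) :=
    Real.rpow_le_rpow hy0 (by linarith [Real.add_one_le_exp y]) (by linarith)
  calc x ^ (2*s) = (4*s)^(2*s) * y^(2*s) := by rw [hxy, Real.mul_rpow h4s.le hy0]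
    _ ≤ (4*s)^(2*s) * (Real.exp y)^(2*s) :=
        mul_le_mul_of_nonneg_left h2 (Real.rpow_nonneg h4s.le _)
    _ = (4*s)^(2*s) * Real.exp (x/2) := by
        rw [← Real.exp_mul]; congr 1; rw [hxy]; field_simp; ring

private lemma hardy_pt_upper {s q : ℝ} (hs : 0 < s) (h0 : 0 ≤ q) (h1 : q < 1) (k : ℕ) :
    (1 + ((k:ℝ)+1)^2)^s * q^k ≤
      2^(s+1) * (4*s)^(2*s) * (1-q)^(-(2*s)) * Real.exp (-((1-q)/2)) ^ k := by
  set l := 1 - q with hl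
  have hl0 : 0 < l := by simp [hl]; linarith
  have hl1 : l ≤ 1 := by simp [hl]; linarith
  set x : ℝ := (k:ℝ) + 1 with hx
  have hx1 : (1:ℝ) ≤ x := by simp [hx]
  have hx0 : (0:ℝ) ≤ x := by linarith
  have hA : (1 + x^2)^s ≤ 2^s * x^(2*s) := by
    have : (1 + x^2) ≤ 2 * x^2 := by nlinarith
    calc (1 + x^2)^s ≤ (2*x^2)^s :=
          Real.rpow_le_rpow (by positivity) this hs.le
      _ = 2^s * x^(2*s) := by
          rw [Real.mul_rpow (by norm_num) (by positivity), ← Real.rpow_natCast x 2,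
            ← Real.rpow_mul hx0]
          norm_num [mul_comm]
  have hB : x^(2*s) ≤ (4*s)^(2*s) * (1-q)^(-(2*s)) * Real.exp (x*l/2) := by
    have hxl : x = (x*l) * l⁻¹ := by field_simp
    have h2 : (x*l)^(2*s) ≤ (4*s)^(2*s) * Real.exp (x*l/2) := hardy_auxB hs (by positivity)
    calc x^(2*s) = (x*l)^(2*s) * (l⁻¹)^(2*s) := by
          rw [← Real.mul_rpow (by positivity) (by positivity), ← hxl]
      _ ≤ ((4*s)^(2*s) * Real.exp (x*l/2)) * (l⁻¹)^(2*s) :=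
          mul_le_mul_of_nonneg_right h2 (Real.rpow_nonneg (by positivity) _)
      _ = (4*s)^(2*s) * (1-q)^(-(2*s)) * Real.exp (x*l/2) := by
          rw [← Real.rpow_neg_one l, ← Real.rpow_mul hl0.le]
          rw [show (-1)*(2*s) = -(2*s) by ring]
          ring
  have hC : q^k ≤ Real.exp (-((k:ℝ)*l)) := by
    calc q^k ≤ (Real.exp (-l))^k :=
          pow_le_pow_left₀ h0 (by linarith [Real.add_one_le_exp (-l)]) k
      _ = Real.exp (-((k:ℝ)*l)) := by
          rw [← Real.exp_nat_mul]; ring_nf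
  have hq0 : (0:ℝ) ≤ q^k := by positivity
  have key : (1 + x^2)^s * q^k ≤
      (2^s * ((4*s)^(2*s) * (1-q)^(-(2*s)) * Real.exp (x*l/2))) * Real.exp (-((k:ℝ)*l)) := by
    apply mul_le_mul _ hC hq0 (by positivity)
    exact le_trans hA (mul_le_mul_of_nonneg_left hB (Real.rpow_nonneg (by norm_num) _))
  refine key.trans ?_
  have hexp : Real.exp (x*l/2) * Real.exp (-((k:ℝ)*l)) ≤ 2 * Real.exp (-(l/2)) ^ k := by
    rw [← Real.exp_add, ← Real.exp_nat_mul]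
    have e1 : x*l/2 + -((k:ℝ)*l) = l/2 + (k:ℝ)*(-(l/2)) := by rw [hx]; ring
    rw [e1, Real.exp_add]
    apply mul_le_mul_of_nonneg_right _ (Real.exp_pos _).le
    have : Real.exp (l/2) ≤ Real.exp (1/2) := Real.exp_le_exp.mpr (by linarith)
    have h2 : Real.exp (1/2:ℝ) ≤ 2 := by
      have hpos := Real.exp_pos (-(1/2):ℝ)
      have he : Real.exp (1/2:ℝ) = (Real.exp (-(1/2):ℝ))⁻¹ := by
        rw [← Real.exp_neg]; norm_num
      rw [he, inv_le_iff_one_le_mul₀ hpos]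
      nlinarith [Real.add_one_le_exp (-(1/2):ℝ)]
    linarith
  calc (2^s * ((4*s)^(2*s) * (1-q)^(-(2*s)) * Real.exp (x*l/2))) * Real.exp (-((k:ℝ)*l))
      = (2^s * ((4*s)^(2*s) * (1-q)^(-(2*s)))) * (Real.exp (x*l/2) * Real.exp (-((k:ℝ)*l))) := by
        ring
    _ ≤ (2^s * ((4*s)^(2*s) * (1-q)^(-(2*s)))) * (2 * Real.exp (-(l/2)) ^ k) := by
        apply mul_le_mul_of_nonneg_left hexp (by positivity)
    _ = 2^(s+1) * (4*s)^(2*s) * (1-q)^(-(2*s)) * Real.exp (-((1-q)/2)) ^ k := by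
        rw [Real.rpow_add (by norm_num : (0:ℝ)<2), Real.rpow_one, ← hl]; ring

private lemma hardy_geom_denom {q : ℝ} (h0 : 0 ≤ q) (h1 : q < 1) :
    (1-q)/4 ≤ 1 - Real.exp (-((1-q)/2)) := by
  set x := (1-q)/2 with hx
  have hx0 : 0 < x := by simp [hx]; linarith
  have hx1 : x ≤ 1/2 := by simp [hx]; linarith
  have h3 : 1 - Real.exp (-x) ≥ x * Real.exp (-x) := by
    have hp := Real.exp_pos (-x)
    have hxe : Real.exp x * Real.exp (-x) = 1 := by rw [← Real.exp_add]; simp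
    nlinarith [Real.add_one_le_exp x]
  have h4 : (1:ℝ)/2 ≤ Real.exp (-x) := by
    have := Real.add_one_le_exp (-x)
    linarith
  have h5 : x/2 ≤ x * Real.exp (-x) := by nlinarith
  have hq : (1-q)/4 = x/2 := by rw [hx]; ring
  linarith

private lemma hardy_T_bound {s q : ℝ} (hs : 0 < s) (h0 : 0 ≤ q) (h1 : q < 1) :
    Summable (fun k : ℕ => (1 + ((k:ℝ)+1)^2)^s * q^k) ∧
    ∑' k:ℕ, (1 + ((k:ℝ)+1)^2)^s * q^k ≤ (2^(s+3) * (4*s)^(2*s)) * (1-q)^(-(2*s+1)) := by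
  set l := 1 - q with hl
  have hl0 : 0 < l := by simp [hl]; linarith
  have hl1 : l ≤ 1 := by simp [hl]; linarith
  set r := Real.exp (-(l/2)) with hr
  have hr0 : 0 ≤ r := (Real.exp_pos _).le
  have hr1 : r < 1 := by rw [hr, Real.exp_lt_one_iff]; linarith
  set D := 2^(s+1) * (4*s)^(2*s) * (1-q)^(-(2*s)) with hD
  have hD0 : 0 ≤ D := by
    have : (0:ℝ) < 4*s := by linarith
    positivity
  have hgeom : Summable (fun k : ℕ => D * r ^ k) :=
    (summable_geometric_of_lt_one hr0 hr1).mul_left D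
  have hptt : ∀ k : ℕ, (1 + ((k:ℝ)+1)^2)^s * q^k ≤ D * r ^ k := by
    intro k
    have := hardy_pt_upper hs h0 h1 k
    convert this using 3
  have hnn : ∀ k : ℕ, 0 ≤ (1 + ((k:ℝ)+1)^2)^s * q^k := by
    intro k; positivity
  have hsum : Summable (fun k : ℕ => (1 + ((k:ℝ)+1)^2)^s * q^k) :=
    Summable.of_nonneg_of_le hnn hptt hgeom
  refine ⟨hsum, ?_⟩
  have h1' : ∑' k:ℕ, (1 + ((k:ℝ)+1)^2)^s * q^k ≤ ∑' k:ℕ, D * r^k :=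
    Summable.tsum_le_tsum hptt hsum hgeom
  have h2' : ∑' k:ℕ, D * r^k = D * (1 - r)⁻¹ := by
    rw [tsum_mul_left, tsum_geometric_of_lt_one hr0 hr1]
  have h3' : (1 - r)⁻¹ ≤ 4 / l := by
    have hden := hardy_geom_denom h0 h1
    rw [← hl] at hden
    have h1r : 0 < 1 - r := by linarith
    rw [inv_le_iff_one_le_mul₀ h1r]
    rw [div_mul_eq_mul_div, le_div_iff₀ hl0]
    nlinarith
  have h4' : D * (1-r)⁻¹ ≤ D * (4/l) := mul_le_mul_of_nonneg_left h3' hD0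
  have h5' : D * (4/l) = (2^(s+3) * (4*s)^(2*s)) * (1-q)^(-(2*s+1)) := by
    rw [hD, ← hl]
    have e1 : l ^ (-(2*s+1)) = l ^ (-(2*s)) * l⁻¹ := by
      rw [show -(2*s+1) = -(2*s) + (-1) by ring, Real.rpow_add hl0, Real.rpow_neg_one]
    have e2 : (2:ℝ)^(s+3) = 2^(s+1) * 4 := by
      rw [show s+3 = (s+1) + 2 by ring, Real.rpow_add (by norm_num), Real.rpow_two]; norm_num
    rw [e1, e2]
    field_simp
  linarith

private lemma hardy_q_ge_exp {l : ℝ} (h0 : 0 < l) (h1 : l ≤ 1/2) :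
    Real.exp (-(2*l)) ≤ 1 - l := by
  have h := Real.add_one_le_exp (2*l)
  have hp : (0:ℝ) < 1 + 2*l := by linarith
  have hinv : Real.exp (-(2*l)) ≤ (1 + 2*l)⁻¹ := by
    rw [Real.exp_neg]
    exact inv_anti₀ hp (by linarith)
  have : (1 + 2*l)⁻¹ ≤ 1 - l := by
    rw [inv_le_iff_one_le_mul₀ hp]
    nlinarith
  linarith

private lemma hardy_T_lower {s q : ℝ} (hs : 0 < s) (h0 : 0 ≤ q) (h1 : q < 1) :
    (Real.exp (-4) * 2^(-(s+1))) * (1-q)^(-(2*s+1)) ≤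
      ∑' k:ℕ, (1 + ((k:ℝ)+1)^2)^s * q^k := by
  have hsum := (hardy_T_bound hs h0 h1).1
  have hnn : ∀ k : ℕ, 0 ≤ (1 + ((k:ℝ)+1)^2)^s * q^k := fun k => by positivity
  set l := 1 - q with hl
  have hl0 : 0 < l := by simp [hl]; linarith
  have hl1 : l ≤ 1 := by simp [hl]; linarith
  rcases le_or_gt l (1/2) with hcase | hcase
  · set N : ℕ := ⌈l⁻¹⌉₊ with hN
    have hli : (2:ℝ) ≤ l⁻¹ := by
      rw [le_inv_comm₀ (by norm_num) hl0]; linarith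
    have hNge : (l⁻¹ : ℝ) ≤ N := Nat.le_ceil _
    have hNle : (N:ℝ) ≤ l⁻¹ + 1 := (Nat.ceil_lt_add_one (by positivity)).le
    have hN2 : 2 ≤ N := by exact_mod_cast (by exact_mod_cast hli.trans hNge : (2:ℝ) ≤ (N:ℝ))
    have hqel : Real.exp (-(2*l)) ≤ q := by
      have h := hardy_q_ge_exp hl0 hcase
      have hq : q = 1 - l := by rw [hl]; ring
      linarith
    have hblock : ∀ k ∈ Finset.Ico (N-1) (2*N-1),
        Real.exp (-4) * l^(-(2*s)) ≤ (1 + ((k:ℝ)+1)^2)^s * q^k := by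
      intro k hk
      rw [Finset.mem_Ico] at hk
      obtain ⟨hk1, hk2⟩ := hk
      have hk1' : (N:ℝ) ≤ (k:ℝ)+1 := by
        have hNk : N ≤ k + 1 := by omega
        exact_mod_cast hNk
      have hk2' : k ≤ 2*N-2 := by omega
      have w1 : l^(-(2*s)) ≤ (1 + ((k:ℝ)+1)^2)^s := by
        have e1 : l^(-(2*s)) = (l⁻¹)^(2*s) := by
          rw [← Real.rpow_neg_one l, ← Real.rpow_mul hl0.le]
          rw [show (-1)*(2*s) = -(2*s) by ring]
        have e2 : (l⁻¹)^(2*s) ≤ ((k:ℝ)+1)^(2*s) := by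
          apply Real.rpow_le_rpow (by positivity) _ (by linarith)
          linarith
        have e3 : ((k:ℝ)+1)^(2*s) = (((k:ℝ)+1)^2)^s := by
          rw [← Real.rpow_natCast ((k:ℝ)+1) 2, ← Real.rpow_mul (by positivity)]
          norm_num
        have e4 : (((k:ℝ)+1)^2)^s ≤ (1 + ((k:ℝ)+1)^2)^s :=
          Real.rpow_le_rpow (by positivity) (by linarith) hs.le
        rw [e1]; linarith [e2.trans_eq e3]
      have w2 : Real.exp (-4) ≤ q^k := by
        have g1 : (Real.exp (-(2*l)))^k ≤ q^k :=
          pow_le_pow_left₀ (Real.exp_pos _).le hqel k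
        have g2 : (Real.exp (-(2*l)))^k = Real.exp (-(2*l*k)) := by
          rw [← Real.exp_nat_mul]; ring_nf
        have g3 : Real.exp (-4) ≤ Real.exp (-(2*l*k)) := by
          rw [Real.exp_le_exp]
          have hk' : (k:ℝ) ≤ 2*(N:ℝ) - 2 := by
            have hc1 : (k:ℝ) ≤ ((2*N-2 : ℕ):ℝ) := by exact_mod_cast hk2'
            have hc2 : ((2*N-2:ℕ):ℝ) = 2*(N:ℝ)-2 := by
              push_cast [Nat.cast_sub (by omega : 2 ≤ 2*N)]; ring
            linarith [hc2.le]
          have hNl : (N:ℝ) - 1 ≤ l⁻¹ := by linarith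
          have hm1 : 2*l*(k:ℝ) ≤ 2*l*(2*(N:ℝ)-2) := by nlinarith
          have h4 : 2*l*(2*(N:ℝ)-2) ≤ 4 := by
            have hm2 : l * ((N:ℝ)-1) ≤ l * l⁻¹ :=
              mul_le_mul_of_nonneg_left hNl hl0.le
            rw [mul_inv_cancel₀ hl0.ne'] at hm2
            nlinarith
          linarith
        calc Real.exp (-4) ≤ Real.exp (-(2*l*k)) := g3
          _ = (Real.exp (-(2*l)))^k := g2.symm
          _ ≤ q^k := g1
      calc Real.exp (-4) * l^(-(2*s)) ≤ q^k * (1 + ((k:ℝ)+1)^2)^s := by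
            apply mul_le_mul w2 w1 (by positivity) (by positivity)
        _ = (1 + ((k:ℝ)+1)^2)^s * q^k := by ring
    have hcard : (Finset.Ico (N-1) (2*N-1)).card = N := by
      rw [Nat.card_Ico]; omega
    have hsumblock : (N:ℝ) * (Real.exp (-4) * l^(-(2*s))) ≤
        ∑ k ∈ Finset.Ico (N-1) (2*N-1), (1 + ((k:ℝ)+1)^2)^s * q^k := by
      have := Finset.sum_le_sum hblock
      rw [Finset.sum_const, hcard, nsmul_eq_mul] at this
      exact this
    have htail : ∑ k ∈ Finset.Ico (N-1) (2*N-1), (1 + ((k:ℝ)+1)^2)^s * q^k ≤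
        ∑' k:ℕ, (1 + ((k:ℝ)+1)^2)^s * q^k :=
      Summable.sum_le_tsum _ (fun k _ => hnn k) hsum
    have hfinal : (Real.exp (-4) * 2^(-(s+1))) * l^(-(2*s+1)) ≤
        (N:ℝ) * (Real.exp (-4) * l^(-(2*s))) := by
      have e1 : l^(-(2*s+1)) = l⁻¹ * l^(-(2*s)) := by
        rw [show -(2*s+1) = -1 + -(2*s) by ring, Real.rpow_add hl0, Real.rpow_neg_one]
      rw [e1]
      have h2s : (2:ℝ)^(-(s+1)) ≤ 1 :=
        Real.rpow_le_one_of_one_le_of_nonpos (by norm_num) (by linarith)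
      have hpos : (0:ℝ) < l^(-(2*s)) := Real.rpow_pos_of_pos hl0 _
      have hexp4 : (0:ℝ) < Real.exp (-4) := Real.exp_pos _
      calc (Real.exp (-4) * 2^(-(s+1))) * (l⁻¹ * l^(-(2*s)))
          ≤ (Real.exp (-4) * 1) * (l⁻¹ * l^(-(2*s))) := by
            apply mul_le_mul_of_nonneg_right _ (by positivity)
            exact mul_le_mul_of_nonneg_left h2s hexp4.le
        _ = Real.exp (-4) * (l⁻¹ * l^(-(2*s))) := by ring
        _ ≤ Real.exp (-4) * ((N:ℝ) * l^(-(2*s))) :=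
            mul_le_mul_of_nonneg_left (mul_le_mul_of_nonneg_right hNge hpos.le) hexp4.le
        _ = (N:ℝ) * (Real.exp (-4) * l^(-(2*s))) := by ring
    linarith
  · have hfirst : (2:ℝ)^s ≤ ∑' k:ℕ, (1 + ((k:ℝ)+1)^2)^s * q^k := by
      have := Summable.le_tsum hsum 0 (fun k _ => hnn k)
      simpa using this.trans_eq' (by norm_num)
    have hup : l^(-(2*s+1)) ≤ 2^(2*s+1) := by
      have e1 : l^(-(2*s+1)) = (l⁻¹)^(2*s+1) := by
        rw [← Real.rpow_neg_one l, ← Real.rpow_mul hl0.le]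
        rw [show (-1)*(2*s+1) = -(2*s+1) by ring]
      rw [e1]
      apply Real.rpow_le_rpow (by positivity) _ (by linarith)
      rw [inv_le_comm₀ hl0 (by norm_num)]; linarith
    have key : (Real.exp (-4) * 2^(-(s+1))) * l^(-(2*s+1)) ≤ 2^s := by
      have h1' : (Real.exp (-4) * 2^(-(s+1))) * l^(-(2*s+1)) ≤
          (Real.exp (-4) * 2^(-(s+1))) * 2^(2*s+1) := by
        apply mul_le_mul_of_nonneg_left hup
        positivity
      have h2' : (2:ℝ)^(-(s+1)) * 2^(2*s+1) = 2^s := by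
        rw [← Real.rpow_add (by norm_num)]; norm_num; ring_nf
      have h3' : Real.exp (-4) ≤ 1 := by
        rw [Real.exp_le_one_iff]; norm_num
      have h2spos : (0:ℝ) < (2:ℝ)^s := Real.rpow_pos_of_pos (by norm_num) _
      nlinarith [Real.exp_pos (-4:ℝ), Real.rpow_pos_of_pos (by norm_num : (0:ℝ)<2) (-(s+1)),
        Real.rpow_pos_of_pos (by norm_num : (0:ℝ)<2) (2*s+1)]
    linarith

end HardyAux

/-- Fourier coefficients of `x ↦ (a e^{ix} + b)/(1 - p e^{ix})`:
`f₀ = b` and `f_k = (a + bp) p^{k-1}` for `k ≥ 1`. -/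
noncomputable def hardyCoef (a b p : ℂ) : ℕ → ℂ := fun k =>
  if k = 0 then b else (a + b * p) * p ^ (k - 1)

private lemma hardyCoef_norm_sq (a b p : ℂ) (k : ℕ) :
    ‖hardyCoef a b p (k+1)‖^2 = ‖a + b*p‖^2 * (‖p‖^2)^k := by
  have : hardyCoef a b p (k+1) = (a + b*p) * p ^ k := by
    simp [hardyCoef]
  rw [this, norm_mul, norm_pow, mul_pow, ← pow_mul, ← pow_mul, Nat.mul_comm]

/-- Explicit computation of the homogeneous `Ḣ^{1/2}` norm and two-sided
`H^s` bounds for the coefficients of `(a e^{ix}+b)/(1-p e^{ix})`, `|p| < 1`. -/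
theorem statement10 :
    (∀ a b p : ℂ, ‖p‖ < 1 →
      (∑' k : ℕ, (k : ℝ) * ‖hardyCoef a b p k‖ ^ 2)
        = ‖a + b * p‖ ^ 2 / (1 - ‖p‖ ^ 2) ^ 2) ∧
    ∀ s : ℝ, 1 / 2 < s → ∃ c : ℝ, 0 < c ∧ ∃ C : ℝ, 0 < C ∧
      ∀ a b p : ℂ, ‖p‖ < 1 →
        c * (‖a + b * p‖ ^ 2 / (1 - ‖p‖ ^ 2) ^ (2 * s + 1)) ≤
          (∑' k : ℕ, if k = 0 then 0 else
            (1 + (k : ℝ) ^ 2) ^ s * ‖hardyCoef a b p k‖ ^ 2) ∧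
        (∑' k : ℕ, if k = 0 then 0 else
            (1 + (k : ℝ) ^ 2) ^ s * ‖hardyCoef a b p k‖ ^ 2) ≤
          C * (‖a + b * p‖ ^ 2 / (1 - ‖p‖ ^ 2) ^ (2 * s + 1)) := by
  constructor
  · intro a b p hp
    set q : ℝ := ‖p‖^2 with hq
    set A : ℝ := ‖a + b*p‖^2 with hA
    have h0 : 0 ≤ q := by positivity
    have h1 : q < 1 := by
      rw [hq]; nlinarith [norm_nonneg p]
    have habs : |q| < 1 := by rw [abs_of_nonneg h0]; exact h1
    have hshift : ∀ k : ℕ, ((k+1 : ℕ) : ℝ) * ‖hardyCoef a b p (k+1)‖^2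
        = A * (((k:ℝ)+1) * q^k) := by
      intro k
      rw [hardyCoef_norm_sq a b p k]
      push_cast
      ring
    have hgsum : Summable (fun k : ℕ => ((k:ℝ)+1) * q ^ k) := by
      have := summable_choose_mul_geometric_of_norm_lt_one (R := ℝ) 1
        (by simpa using habs)
      simpa using this
    have hsum1 : Summable (fun k : ℕ => ((k+1:ℕ):ℝ) * ‖hardyCoef a b p (k+1)‖^2) := by
      have := hgsum.mul_left A
      apply this.congr
      intro k
      rw [hshift k]
    have hsumf : Summable (fun k : ℕ => (k:ℝ) * ‖hardyCoef a b p k‖^2) :=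
      (summable_nat_add_iff 1).mp (by exact_mod_cast hsum1)
    rw [Summable.tsum_eq_zero_add hsumf]
    have e0 : ((0:ℕ):ℝ) * ‖hardyCoef a b p 0‖^2 = 0 := by simp
    rw [e0, zero_add]
    have e1 : ∑' k : ℕ, ((k+1:ℕ):ℝ) * ‖hardyCoef a b p (k+1)‖^2
        = A * ∑' k : ℕ, ((k:ℝ)+1) * q^k := by
      rw [← tsum_mul_left]
      exact tsum_congr hshift
    have e2 : ∑' k : ℕ, ((k:ℝ)+1) * q^k = 1/(1-q)^2 := by
      have := tsum_choose_mul_geometric_of_norm_lt_one (𝕜 := ℝ) 1 (by simpa using habs)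
      simpa using this
    calc ∑' k : ℕ, (((k:ℕ)+1:ℕ):ℝ) * ‖hardyCoef a b p ((k:ℕ)+1)‖^2
        = A * (1/(1-q)^2) := by rw [e1, e2]
      _ = A / (1-q)^2 := by ring
  · intro s hs
    have hs0 : 0 < s := by linarith
    refine ⟨Real.exp (-4) * 2^(-(s+1)), by positivity, 2^(s+3) * (4*s)^(2*s), ?_, ?_⟩
    · have : (0:ℝ) < 4*s := by linarith
      positivity
    intro a b p hp
    set q : ℝ := ‖p‖^2 with hq
    set A : ℝ := ‖a + b*p‖^2 with hA
    have h0 : 0 ≤ q := by positivity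
    have h1 : q < 1 := by rw [hq]; nlinarith [norm_nonneg p]
    have hA0 : 0 ≤ A := by positivity
    have hl0 : (0:ℝ) < 1 - q := by linarith
    obtain ⟨hTsum, hTub⟩ := hardy_T_bound hs0 h0 h1
    have hTlb := hardy_T_lower hs0 h0 h1
    set T : ℝ := ∑' k:ℕ, (1 + ((k:ℝ)+1)^2)^s * q^k with hT
    -- identify the statement's sum with A * T
    have hshift : ∀ k : ℕ, (if (k+1:ℕ) = 0 then (0:ℝ) else
        (1 + ((k+1:ℕ):ℝ)^2)^s * ‖hardyCoef a b p (k+1)‖^2)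
        = A * ((1 + ((k:ℝ)+1)^2)^s * q^k) := by
      intro k
      rw [if_neg (Nat.succ_ne_zero k), hardyCoef_norm_sq a b p k]
      push_cast
      ring
    have hsum1 : Summable (fun k : ℕ => if (k+1:ℕ) = 0 then (0:ℝ) else
        (1 + ((k+1:ℕ):ℝ)^2)^s * ‖hardyCoef a b p (k+1)‖^2) := by
      have := hTsum.mul_left A
      apply this.congr
      intro k
      rw [hshift k]
    have hsumf : Summable (fun k : ℕ => if k = 0 then (0:ℝ) else
        (1 + (k:ℝ)^2)^s * ‖hardyCoef a b p k‖^2) :=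
      (summable_nat_add_iff 1).mp (by exact_mod_cast hsum1)
    have hval : (∑' k : ℕ, if k = 0 then (0:ℝ) else
        (1 + (k:ℝ)^2)^s * ‖hardyCoef a b p k‖^2) = A * T := by
      rw [Summable.tsum_eq_zero_add hsumf]
      simp only [if_true, zero_add]
      rw [hT, ← tsum_mul_left]
      exact tsum_congr hshift
    rw [hval]
    have hdiv : A / (1-q)^(2*s+1) = A * (1-q)^(-(2*s+1)) := by
      rw [Real.rpow_neg hl0.le, div_eq_mul_inv]
    constructor
    · rw [hdiv]
      calc Real.exp (-4) * 2^(-(s+1)) * (A * (1-q)^(-(2*s+1)))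
          = A * ((Real.exp (-4) * 2^(-(s+1))) * (1-q)^(-(2*s+1))) := by ring
        _ ≤ A * T := mul_le_mul_of_nonneg_left hTlb hA0
    · rw [hdiv]
      calc A * T ≤ A * ((2^(s+3) * (4*s)^(2*s)) * (1-q)^(-(2*s+1))) :=
            mul_le_mul_of_nonneg_left hTub hA0
        _ = 2^(s+3) * (4*s)^(2*s) * (A * (1-q)^(-(2*s+1))) := by ring
end
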